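/- Let 0 < p < 1 and 0 < q < 1, and define the bit-flip channel E_1(ρ) = pρ + (1−p)XρX and the phase-flip channel E_2(ρ) = qρ + (1−q)ZρZ on 2×2 matrices. Then E_1 and E_2 cannot be unambiguously discriminated without an ancilla: for every unit vector ψ ∈ ℂ², the output states E_1(|ψ⟩⟨ψ|) and E_2(|ψ⟩⟨ψ|) are not unambiguously distinguishable. -/

import Mathlib

open Matrix Kronecker
open scoped ComplexOrder

noncomputable section

/-- A quantum operation on ℂ^d given by a finite family of Kraus operators
satisfying the completeness condition. -/
structure QuantumOp (d : ℕ) where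
  m : ℕ
  K : Fin m → Matrix (Fin d) (Fin d) ℂ
  complete : ∑ k, (K k)ᴴ * K k = 1

/-- The support of a quantum operation: the span of its Kraus operators. -/
def QuantumOp.supp {d : ℕ} (E : QuantumOp d) : Submodule ℂ (Matrix (Fin d) (Fin d) ℂ) :=
  Submodule.span ℂ (Set.range E.K)

/-- The output state (E ⊗ I)(|ψ⟩⟨ψ|) = Σ_k (E^k ⊗ I)|ψ⟩⟨ψ|(E^k ⊗ I)†. -/
def QuantumOp.output {d : ℕ} (E : QuantumOp d) (da : ℕ) (ψ : Fin d × Fin da → ℂ) :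
    Matrix (Fin d × Fin da) (Fin d × Fin da) ℂ :=
  ∑ k, (E.K k ⊗ₖ (1 : Matrix (Fin da) (Fin da) ℂ)) * vecMulVec ψ (star ψ) *
    (E.K k ⊗ₖ (1 : Matrix (Fin da) (Fin da) ℂ))ᴴ

/-- States σ_1, …, σ_n are unambiguously distinguishable if there is a POVM
{Π_0, Π_1, …, Π_n} with tr(Π_i σ_j) = 0 for i ≠ j and tr(Π_i σ_i) > 0. -/
def UnambiguouslyDistinguishable {μ : Type*} [Fintype μ] [DecidableEq μ] {n : ℕ}
    (σ : Fin n → Matrix μ μ ℂ) : Prop :=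
  ∃ P0 : Matrix μ μ ℂ, ∃ P : Fin n → Matrix μ μ ℂ,
    P0.PosSemidef ∧ (∀ i, (P i).PosSemidef) ∧
    (P0 + ∑ i, P i = 1) ∧
    (∀ i j, i ≠ j → (P i * σ j).trace = 0) ∧
    (∀ i, 0 < (P i * σ i).trace)

/-- The Pauli X matrix. -/
def pauliX : Matrix (Fin 2) (Fin 2) ℂ := !![0, 1; 1, 0]

/-- The Pauli Z matrix. -/
def pauliZ : Matrix (Fin 2) (Fin 2) ℂ := !![1, 0; 0, -1]

/-- The bit-flip channel E₁(ρ) = pρ + (1-p)XρX. -/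
def bitFlip (p : ℝ) (ρ : Matrix (Fin 2) (Fin 2) ℂ) : Matrix (Fin 2) (Fin 2) ℂ :=
  (p : ℂ) • ρ + ((1 - p : ℝ) : ℂ) • (pauliX * ρ * pauliX)

/-- The phase-flip channel E₂(ρ) = qρ + (1-q)ZρZ. -/
def phaseFlip (q : ℝ) (ρ : Matrix (Fin 2) (Fin 2) ℂ) : Matrix (Fin 2) (Fin 2) ℂ :=
  (q : ℂ) • ρ + ((1 - q : ℝ) : ℂ) • (pauliZ * ρ * pauliZ)

/-- for 0 < p,q < 1, the bit-flip and phase-flip channels cannot be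
unambiguously discriminated without an ancilla: for every unit vector ψ ∈ ℂ², the two
output states are not unambiguously distinguishable. -/
private lemma tr_rank1 (A : Matrix (Fin 2) (Fin 2) ℂ) (x : Fin 2 → ℂ) :
    (A * vecMulVec x (star x)).trace = star x ⬝ᵥ A *ᵥ x := by
  simp [Matrix.trace, Matrix.mul_apply, Matrix.vecMulVec_apply, dotProduct,
    Matrix.mulVec, Fin.sum_univ_two, Matrix.diag]
  ring

private lemma pauli_conj (M : Matrix (Fin 2) (Fin 2) ℂ) (hM : Mᴴ = M) (x : Fin 2 → ℂ) :
    M * vecMulVec x (star x) * M = vecMulVec (M *ᵥ x) (star (M *ᵥ x)) := by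
  have h : ∀ i j, M i j = star (M j i) := by
    intro i j; conv_lhs => rw [← hM]
    simp [conjTranspose_apply]
  funext i j
  simp only [Matrix.mul_apply, Matrix.vecMulVec_apply, Matrix.mulVec, dotProduct,
    Fin.sum_univ_two, Pi.star_apply, star_add, star_mul']
  rw [← h 0 j, ← h 1 j]
  ring

private lemma split_zero (a b : ℂ) (c d : ℝ) (hc : 0 < c) (hd : 0 < d)
    (ha : 0 ≤ a) (hb : 0 ≤ b) (h : (c : ℂ) * a + (d : ℂ) * b = 0) : a = 0 ∧ b = 0 := by
  rw [Complex.nonneg_iff] at ha hb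
  have hre : c * a.re + d * b.re = 0 := by
    have := congrArg Complex.re h; simpa [← ha.2, ← hb.2] using this
  have h1 : a.re = 0 := by nlinarith [ha.1, hb.1]
  have h2 : b.re = 0 := by nlinarith [ha.1, hb.1]
  constructor <;> apply Complex.ext <;> simp [h1, h2, ← ha.2, ← hb.2]

private lemma hXherm : pauliXᴴ = pauliX := by
  ext i j; fin_cases i <;> fin_cases j <;> simp [pauliX]

private lemma hZherm : pauliZᴴ = pauliZ := by
  ext i j; fin_cases i <;> fin_cases j <;> simp [pauliZ]

private lemma hXvec (ψ : Fin 2 → ℂ) : pauliX *ᵥ ψ = ![ψ 1, ψ 0] := by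
  funext i; fin_cases i <;>
    simp [pauliX, Matrix.mulVec, dotProduct, Fin.sum_univ_two]

private lemma hZvec (ψ : Fin 2 → ℂ) : pauliZ *ᵥ ψ = ![ψ 0, -ψ 1] := by
  funext i; fin_cases i <;>
    simp [pauliZ, Matrix.mulVec, dotProduct, Fin.sum_univ_two]

theorem bitFlip_phaseFlip_not_unambig_no_ancilla (p q : ℝ)
    (hp₀ : 0 < p) (hp₁ : p < 1) (hq₀ : 0 < q) (hq₁ : q < 1)
    (ψ : Fin 2 → ℂ) (hψ : star ψ ⬝ᵥ ψ = 1) :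
    ¬ UnambiguouslyDistinguishable
        ![bitFlip p (vecMulVec ψ (star ψ)), phaseFlip q (vecMulVec ψ (star ψ))] := by
  rintro ⟨P0, P, -, hP, -, hoff, hdiag⟩
  have h01 := hoff 0 1 (by decide)
  have h10 := hoff 1 0 (by decide)
  have hd0 := hdiag 0
  have hd1 := hdiag 1
  simp only [Matrix.cons_val_zero, Matrix.cons_val_one, Matrix.head_cons] at h01 h10 hd0 hd1
  rw [phaseFlip, pauli_conj pauliZ hZherm ψ, mul_add, Matrix.mul_smul, Matrix.mul_smul,
    Matrix.trace_add, Matrix.trace_smul, Matrix.trace_smul, tr_rank1, tr_rank1,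
    smul_eq_mul, smul_eq_mul] at h01
  rw [bitFlip, pauli_conj pauliX hXherm ψ, mul_add, Matrix.mul_smul, Matrix.mul_smul,
    Matrix.trace_add, Matrix.trace_smul, Matrix.trace_smul, tr_rank1, tr_rank1,
    smul_eq_mul, smul_eq_mul] at h10 hd0
  rw [phaseFlip, pauli_conj pauliZ hZherm ψ, mul_add, Matrix.mul_smul, Matrix.mul_smul,
    Matrix.trace_add, Matrix.trace_smul, Matrix.trace_smul, tr_rank1, tr_rank1,
    smul_eq_mul, smul_eq_mul] at hd1
  obtain ⟨ha0, hb0⟩ := split_zero _ _ q (1 - q) hq₀ (by linarith)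
    ((hP 0).dotProduct_mulVec_nonneg ψ) ((hP 0).dotProduct_mulVec_nonneg _) h01
  obtain ⟨ha1, hb1⟩ := split_zero _ _ p (1 - p) hp₀ (by linarith)
    ((hP 1).dotProduct_mulVec_nonneg ψ) ((hP 1).dotProduct_mulVec_nonneg _) h10
  have hP0ψ : P 0 *ᵥ ψ = 0 := ((hP 0).dotProduct_mulVec_zero_iff ψ).mp ha0
  have hP0Z : P 0 *ᵥ (pauliZ *ᵥ ψ) = 0 := ((hP 0).dotProduct_mulVec_zero_iff _).mp hb0
  have hP1ψ : P 1 *ᵥ ψ = 0 := ((hP 1).dotProduct_mulVec_zero_iff ψ).mp ha1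
  have hP1X : P 1 *ᵥ (pauliX *ᵥ ψ) = 0 := ((hP 1).dotProduct_mulVec_zero_iff _).mp hb1
  -- nonvanishing
  have hX0 : P 0 *ᵥ (pauliX *ᵥ ψ) ≠ 0 := by
    intro h
    rw [ha0, ((hP 0).dotProduct_mulVec_zero_iff _).mpr h] at hd0
    simp at hd0
  have hZ1 : P 1 *ᵥ (pauliZ *ᵥ ψ) ≠ 0 := by
    intro h
    rw [ha1, ((hP 1).dotProduct_mulVec_zero_iff _).mpr h] at hd1
    simp at hd1
  by_cases h0 : ψ 0 = 0
  · apply hZ1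
    have : pauliZ *ᵥ ψ = -ψ := by
      rw [hZvec]; funext i; fin_cases i <;> simp [h0]
    rw [this, Matrix.mulVec_neg, hP1ψ, neg_zero]
  by_cases h1 : ψ 1 = 0
  · apply hZ1
    have : pauliZ *ᵥ ψ = ψ := by
      rw [hZvec]; funext i; fin_cases i <;> simp [h1]
    rw [this, hP1ψ]
  apply hX0
  rw [hXvec]
  funext i
  have e0 := congrFun hP0ψ i
  have e1 := congrFun hP0Z i
  rw [hZvec] at e1
  simp only [Matrix.mulVec, dotProduct, Fin.sum_univ_two, Pi.zero_apply,
    Matrix.cons_val_zero, Matrix.cons_val_one, Matrix.head_cons] at e0 e1 ⊢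
  have k0 : P 0 i 0 = 0 := by
    have : P 0 i 0 * ψ 0 = 0 := by linear_combination (e0 + e1) / 2
    exact (mul_eq_zero.mp this).resolve_right h0
  have k1 : P 0 i 1 = 0 := by
    have : P 0 i 1 * ψ 1 = 0 := by linear_combination (e0 - e1) / 2
    exact (mul_eq_zero.mp this).resolve_right h1
  simp [k0, k1]
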